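/- Let R be an NI ring (the set of nilpotent elements forms a two-sided ideal) which is (m,n)-regularly nil clean for some non-negative integers m, n with (m,n) ≠ (0,0). Then R is (p,q)-regularly nil clean for every pair of non-negative integers p, q. -/

import Mathlib

open Polynomial

section Aux
variable {S : Type*} [Ring S]

lemma aux_idem_central [IsReduced S] {e : S} (he : e * e = e) (x : S) : e * x = x * e := by
  have hee : ∀ y : S, e * (e * y) = e * y := fun y => by rw [← mul_assoc, he]
  have h1 : e * x * e = e * x := by
    have hz : (e * x - e * x * e) * (e * x - e * x * e) = 0 := by
      simp only [mul_sub, sub_mul, mul_assoc, hee]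
      abel
    exact (sub_eq_zero.mp (IsReduced.eq_zero (e * x - e * x * e) ⟨2, by rw [pow_two]; exact hz⟩)).symm
  have h2 : x * e = e * x * e := by
    have hz : (x * e - e * x * e) * (x * e - e * x * e) = 0 := by
      simp only [mul_sub, sub_mul, mul_assoc, hee]
      abel
    exact sub_eq_zero.mp (IsReduced.eq_zero (x * e - e * x * e) ⟨2, by rw [pow_two]; exact hz⟩)
  rw [h2, h1]

lemma aux_left_inv [IsReduced S] {e a l : S} (hae : a * e = a) (hea : e * a = a)
    (hal : a * l = e) (hle : l * e = l) : l * a = e := by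
  have hf : (l * a) * (l * a) = l * a := by
    rw [mul_assoc l a, ← mul_assoc a l, hal, hea]
  have hc := aux_idem_central hf
  have haf : a * (l * a) = a := by rw [← mul_assoc, hal, hea]
  calc l * a = (l * a) * e := by rw [mul_assoc, hae]
    _ = (l * a) * (a * l) := by rw [hal]
    _ = ((l * a) * a) * l := by simp only [mul_assoc]
    _ = (a * (l * a)) * l := by rw [hc a]
    _ = a * l := by rw [haf]
    _ = e := hal

lemma aux_right_inv [IsReduced S] {e a l : S} (hae : a * e = a) (hea : e * a = a)
    (hla : l * a = e) (hel : e * l = l) : a * l = e := by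
  have hf : (a * l) * (a * l) = a * l := by
    rw [mul_assoc a l, ← mul_assoc l a, hla, hel]
  have hc := aux_idem_central hf
  have hfa : (a * l) * a = a := by rw [mul_assoc, hla, hae]
  calc a * l = e * (a * l) := by rw [← mul_assoc, hea]
    _ = (l * a) * (a * l) := by rw [hla]
    _ = l * (a * (a * l)) := by simp only [mul_assoc]
    _ = l * ((a * l) * a) := by rw [← hc a]
    _ = l * a := by rw [hfa]
    _ = e := hla

lemma aux_core [IsReduced S] {m n : ℕ} (hmn : m + n ≠ 0)
    {a e r : S} (her : e = a ^ m * r * a ^ n) (he : e * e = e)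
    (hz : a ^ m * (1 - e) * a ^ n = 0) {p q : ℕ} (hpq : p + q ≠ 0) :
    ∃ w : S, a ^ p * w * a ^ q = e ∧ a ^ p * (1 - e) * a ^ q = 0 := by
  have hcen : ∀ x : S, e * x = x * e := aux_idem_central he
  have hee : ∀ y : S, e * (e * y) = e * y := fun y => by rw [← mul_assoc, he]
  have hcenp : ∀ (x : S) (k : ℕ), e * x ^ k = x ^ k * e := fun x k =>
    (Commute.pow_right (show Commute e x from hcen x) k)
  have h1e : (1 - e) * (1 - e) = 1 - e := IsIdempotentElem.one_sub he
  have hcen1 : ∀ x : S, (1 - e) * x = x * (1 - e) := aux_idem_central h1e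
  have hone : (1 - e) ^ (m + n) = 1 - e := by
    obtain ⟨s, hs⟩ := Nat.exists_eq_succ_of_ne_zero hmn
    rw [hs]; exact IsIdempotentElem.pow_succ_eq s h1e
  have hcomm1 : Commute a (1 - e) := (Commute.one_right a).sub_right (hcen a).symm
  have hann : (a * (1 - e)) ^ (m + n) = 0 := by
    rw [hcomm1.mul_pow, hone, pow_add, mul_assoc, ← hcen1 (a ^ n), ← mul_assoc, hz]
  have hae : a * e = a := by
    have h0 := IsReduced.eq_zero _ ⟨m + n, hann⟩
    have h1 : a * 1 - a * e = 0 := by rw [← mul_sub]; exact h0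
    rw [mul_one] at h1
    exact (sub_eq_zero.mp h1).symm
  have hea : e * a = a := by rw [hcen, hae]
  have haep : ∀ k : ℕ, a ^ (k + 1) * e = a ^ (k + 1) := fun k => by
    rw [pow_succ, mul_assoc, hae]
  have heap : ∀ k : ℕ, e * a ^ (k + 1) = a ^ (k + 1) := fun k => by
    rw [hcenp a, haep]
  -- the key normalized identity
  have hkey0 : a ^ m * (e * (r * (e * a ^ n))) = e := by
    have : a ^ m * (e * r * e) * a ^ n = e := by
      calc a ^ m * (e * r * e) * a ^ n
          = (e * a ^ m) * r * (a ^ n * e) := by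
            rw [hcenp a m, ← hcenp a n]; simp only [mul_assoc]
        _ = e * (a ^ m * r * a ^ n) * e := by simp only [mul_assoc]
        _ = e * e * e := by rw [← her]
        _ = e := by rw [he, he]
    simpa only [mul_assoc] using this
  -- construct two-sided inverse of a relative to e
  have hl : ∃ l : S, a * l = e ∧ l * a = e ∧ e * l = l ∧ l * e = l := by
    have hEa : ∀ (k : ℕ) (y : S), e * (a ^ k * y) = a ^ k * (e * y) := fun k y => by
      rw [← mul_assoc, hcenp a k, mul_assoc]
    rcases (by omega : 1 ≤ m ∨ 1 ≤ n) with hm1 | hn1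
    · obtain ⟨k, hk⟩ : ∃ k, m = k + 1 := ⟨m - 1, by omega⟩
      refine ⟨a ^ k * (e * (r * (e * a ^ n))), ?_, ?_, ?_, ?_⟩
      · -- a * l = e
        rw [← mul_assoc, ← pow_succ', ← hk]; exact hkey0
      · -- l * a = e : from left inverse lemma
        refine aux_left_inv hae hea ?_ ?_
        · rw [← mul_assoc, ← pow_succ', ← hk]; exact hkey0
        · simp only [mul_assoc]
          rw [← hcenp a n, hee]
      · -- e * l = l
        rw [hEa, hee]
      · -- l * e = l
        simp only [mul_assoc]
        rw [← hcenp a n, hee]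
    · obtain ⟨s, hs⟩ : ∃ s, n = s + 1 := ⟨n - 1, by omega⟩
      refine ⟨a ^ m * (e * (r * (e * a ^ s))), ?_, ?_, ?_, ?_⟩
      · -- a * l = e: from right inverse lemma
        refine aux_right_inv hae hea ?_ ?_
        · simp only [mul_assoc]
          rw [← pow_succ, ← hs]; exact hkey0
        · rw [hEa, hee]
      · -- l * a = e
        simp only [mul_assoc]
        rw [← pow_succ, ← hs]; exact hkey0
      · rw [hEa, hee]
      · simp only [mul_assoc]
        rw [← hcenp a s, hee]
  obtain ⟨l, hal, hla, hel, hle⟩ := hl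
  have hepow : ∀ k : ℕ, e * l ^ (k + 1) = l ^ (k + 1) := fun k => by
    rw [pow_succ', ← mul_assoc, hel]
  have hAL : ∀ k : ℕ, a ^ (k + 1) * l ^ (k + 1) = e := by
    intro k; induction k with
    | zero => simpa using hal
    | succ j ih =>
      calc a ^ (j + 1 + 1) * l ^ (j + 1 + 1) = (a ^ (j + 1) * a) * (l * l ^ (j + 1)) := by
            rw [pow_succ a (j+1), pow_succ' l (j+1)]
        _ = a ^ (j + 1) * ((a * l) * l ^ (j + 1)) := by simp only [mul_assoc]
        _ = a ^ (j + 1) * (e * l ^ (j + 1)) := by rw [hal]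
        _ = a ^ (j + 1) * l ^ (j + 1) := by rw [hepow]
        _ = e := ih
  have hLA : ∀ k : ℕ, l ^ (k + 1) * a ^ (k + 1) = e := by
    intro k; induction k with
    | zero => simpa using hla
    | succ j ih =>
      calc l ^ (j + 1 + 1) * a ^ (j + 1 + 1) = (l ^ (j + 1) * l) * (a * a ^ (j + 1)) := by
            rw [pow_succ l (j+1), pow_succ' a (j+1)]
        _ = l ^ (j + 1) * ((l * a) * a ^ (j + 1)) := by simp only [mul_assoc]
        _ = l ^ (j + 1) * (e * a ^ (j + 1)) := by rw [hla]
        _ = l ^ (j + 1) * a ^ (j + 1) := by rw [heap]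
        _ = e := ih
  have hw : a ^ p * l ^ (p + q) * a ^ q = e := by
    rcases Nat.eq_zero_or_pos p with hp0 | hp0
    · subst hp0
      obtain ⟨j, rfl⟩ : ∃ j, q = j + 1 := ⟨q - 1, by omega⟩
      simp only [pow_zero, one_mul, Nat.zero_add]
      exact hLA j
    · rcases Nat.eq_zero_or_pos q with hq0 | hq0
      · subst hq0
        obtain ⟨i, rfl⟩ : ∃ i, p = i + 1 := ⟨p - 1, by omega⟩
        simp only [pow_zero, mul_one, Nat.add_zero]
        exact hAL i
      · obtain ⟨i, rfl⟩ : ∃ i, p = i + 1 := ⟨p - 1, by omega⟩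
        obtain ⟨j, rfl⟩ : ∃ j, q = j + 1 := ⟨q - 1, by omega⟩
        calc a ^ (i + 1) * l ^ ((i + 1) + (j + 1)) * a ^ (j + 1)
            = (a ^ (i + 1) * l ^ (i + 1)) * (l ^ (j + 1) * a ^ (j + 1)) := by
              rw [pow_add l (i + 1) (j + 1)]; simp only [mul_assoc]
          _ = e * e := by rw [hAL, hLA]
          _ = e := he
  have hz2 : a ^ p * (1 - e) * a ^ q = 0 := by
    obtain ⟨s2, hs2⟩ : ∃ s2, p + q = s2 + 1 := ⟨p + q - 1, by omega⟩
    calc a ^ p * (1 - e) * a ^ q = a ^ p * a ^ q - a ^ p * (e * a ^ q) := by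
          rw [mul_sub, mul_one, sub_mul]; simp only [mul_assoc]
      _ = a ^ (p + q) - a ^ (p + q) * e := by
          rw [hcen (a ^ q), ← mul_assoc, ← pow_add]
      _ = 0 := by rw [hs2, haep, sub_self]
  exact ⟨l ^ (p + q), hw, hz2⟩

end Aux

theorem stmt_6 {R : Type*} [Ring R]
    (hNI : ∃ I : TwoSidedIdeal R, ∀ x : R, x ∈ I ↔ IsNilpotent x)
    (m n : ℕ) (hmn : (m, n) ≠ (0, 0))
    (h : ∀ a : R, ∃ e r : R, e = a ^ m * r * a ^ n ∧ IsIdempotentElem e ∧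
        IsNilpotent (a ^ m * (1 - e) * a ^ n)) :
    ∀ p q : ℕ, ∀ a : R, ∃ e r : R, e = a ^ p * r * a ^ q ∧ IsIdempotentElem e ∧
        IsNilpotent (a ^ p * (1 - e) * a ^ q) := by
  obtain ⟨I, hI⟩ := hNI
  intro p q a
  rcases Nat.eq_zero_or_pos (p + q) with hpq | hpq
  · have hp : p = 0 := by omega
    have hq : q = 0 := by omega
    subst hp; subst hq
    exact ⟨1, 1, by simp, IsIdempotentElem.one, by simpa using IsNilpotent.zero⟩
  · have hpq' : p + q ≠ 0 := by omega
    have hmn' : m + n ≠ 0 := by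
      intro h0
      exact hmn (by simp [Prod.ext_iff]; omega)
    have hmem : ∀ x : R, (x : I.ringCon.Quotient) = 0 ↔ IsNilpotent x := by
      intro x
      rw [← I.ringCon.coe_zero, RingCon.eq, I.rel_iff, sub_zero, hI]
    have hsurj : ∀ s : I.ringCon.Quotient, ∃ x : R, (x : I.ringCon.Quotient) = s :=
      fun s => (Quotient.mk''_surjective s).imp (fun _ hx => hx)
    haveI hred : IsReduced I.ringCon.Quotient := by
      constructor
      intro s hs
      obtain ⟨x, rfl⟩ := hsurj s
      obtain ⟨k, hk⟩ := hs
      have h1 : ((x ^ k : R) : I.ringCon.Quotient) = 0 := by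
        rw [RingCon.coe_pow]; exact hk
      exact (hmem x).mpr (IsNilpotent.of_pow ((hmem _).mp h1))
    obtain ⟨e0, r0, he0, hid0, hnil0⟩ := h a
    have her : ((e0 : R) : I.ringCon.Quotient) =
        (a : I.ringCon.Quotient) ^ m * (r0 : I.ringCon.Quotient) * (a : I.ringCon.Quotient) ^ n := by
      rw [he0, RingCon.coe_mul, RingCon.coe_mul, RingCon.coe_pow, RingCon.coe_pow]
    have hidQ : ((e0 : R) : I.ringCon.Quotient) * ((e0 : R) : I.ringCon.Quotient) = (e0 : I.ringCon.Quotient) := by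
      rw [← RingCon.coe_mul, hid0.eq]
    have hzQ : (a : I.ringCon.Quotient) ^ m * (1 - (e0 : I.ringCon.Quotient)) * (a : I.ringCon.Quotient) ^ n = 0 := by
      have h1 := (hmem _).mpr hnil0
      rwa [RingCon.coe_mul, RingCon.coe_mul, RingCon.coe_sub, RingCon.coe_one,
        RingCon.coe_pow, RingCon.coe_pow] at h1
    obtain ⟨w, hw, hz2⟩ := aux_core hmn' her hidQ hzQ hpq'
    obtain ⟨L, hL⟩ := hsurj w
    set x := a ^ p * L * a ^ q with hxdef
    have hx : (x : I.ringCon.Quotient) = (e0 : I.ringCon.Quotient) := by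
      rw [hxdef, RingCon.coe_mul, RingCon.coe_mul, RingCon.coe_pow, RingCon.coe_pow, hL, hw]
    have hxx : IsNilpotent (x * x - x) := by
      apply (hmem _).mp
      rw [RingCon.coe_sub, RingCon.coe_mul, hx, hidQ, sub_self]
    have hx1 : IsNilpotent (a ^ p * (1 - x) * a ^ q) := by
      apply (hmem _).mp
      rw [RingCon.coe_mul, RingCon.coe_mul, RingCon.coe_sub, RingCon.coe_one,
        RingCon.coe_pow, RingCon.coe_pow, hx, hz2]
    -- polynomial idempotent lifting
    obtain ⟨k0, hk0⟩ := hxx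
    set t := x * x - x with htdef
    have hcommP : ∀ P Q2 : ℤ[X], Commute (aeval x P) (aeval x Q2) := fun P Q2 =>
      show aeval x P * aeval x Q2 = aeval x Q2 * aeval x P by
        rw [← map_mul, ← map_mul, mul_comm]
    have hdvd : ∀ P : ℤ[X], P.IsRoot 0 → P.IsRoot 1 → ((X : ℤ[X]) ^ 2 - X) ∣ P := by
      intro P h0 h1
      have d0 : (X - C (0 : ℤ)) ∣ P := dvd_iff_isRoot.mpr h0
      have d1 : (X - C (1 : ℤ)) ∣ P := dvd_iff_isRoot.mpr h1
      have hcop : IsCoprime (X - C (0 : ℤ)) (X - C 1) :=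
        ⟨1, -1, by simp only [map_zero, map_one]; ring⟩
      have h2 := hcop.mul_dvd d0 d1
      have heq : (X - C (0 : ℤ)) * (X - C 1) = X ^ 2 - X := by
        simp only [map_zero, map_one]; ring
      rwa [heq] at h2
    have haeT : aeval x ((X : ℤ[X]) ^ 2 - X) = t := by
      simp [htdef, sq]
    set k := k0 + 2 with hkdef
    have hkne : k ≠ 0 := by omega
    set u := x ^ k + (1 - x) ^ k with hudef
    have haeU : aeval x ((X : ℤ[X]) ^ k + (1 - X) ^ k) = u := by
      simp [hudef]
    have htk : t ^ k = 0 := by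
      rw [hkdef, pow_add, hk0, zero_mul]
    -- u is a unit
    obtain ⟨W1, hW1⟩ := hdvd ((X : ℤ[X]) ^ k + (1 - X) ^ k - 1)
      (by simp [IsRoot, zero_pow hkne]) (by simp [IsRoot, zero_pow hkne])
    have hu1 : u - 1 = t * aeval x W1 := by
      rw [← haeT, ← map_mul, ← hW1, map_sub, map_one, haeU]
    have hnilu : IsNilpotent (u - 1) := by
      rw [hu1, ← haeT]
      exact (hcommP _ _).isNilpotent_mul_right ⟨k0, by rw [haeT]; exact hk0⟩
    have huunit : IsUnit u := by
      have h2 := hnilu.isUnit_one_add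
      rwa [add_sub_cancel] at h2
    obtain ⟨U, hU⟩ := huunit
    set v := ((U⁻¹ : Rˣ) : R) with hvdef
    have huv : u * v = 1 := by rw [hvdef, ← hU, Units.mul_inv]
    have hxu : Commute x u := by
      have h2 := hcommP X ((X : ℤ[X]) ^ k + (1 - X) ^ k)
      rwa [aeval_X, haeU] at h2
    have hxv : Commute x v := (hU ▸ hxu).units_inv_right
    have hxkv : Commute (x ^ k) v := hxv.pow_left k
    -- x^k * (1-x)^k = 0
    have hx1x : x ^ k * (1 - x) ^ k = 0 := by
      have hcx : Commute x (1 - x) := (Commute.one_right x).sub_right (Commute.refl x)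
      have h2 : x * (1 - x) = -t := by rw [mul_sub, mul_one, htdef, neg_sub]
      calc x ^ k * (1 - x) ^ k = (x * (1 - x)) ^ k := (hcx.mul_pow k).symm
        _ = (-t) ^ k := by rw [h2]
        _ = (-1 : R) ^ k * t ^ k := by rw [neg_pow]
        _ = 0 := by rw [htk, mul_zero]
    have hxku : x ^ k * u = x ^ k * x ^ k := by
      rw [hudef, mul_add, hx1x, add_zero]
    set e := x ^ k * v with hedef
    -- e is idempotent
    have hide : e * e = e := by
      calc e * e = x ^ k * (v * x ^ k) * v := by simp only [hedef, mul_assoc]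
        _ = x ^ k * (x ^ k * v) * v := by rw [← hxkv]
        _ = (x ^ k * x ^ k) * (v * v) := by simp only [mul_assoc]
        _ = (x ^ k * u) * (v * v) := by rw [hxku]
        _ = x ^ k * ((u * v) * v) := by simp only [mul_assoc]
        _ = x ^ k * v := by rw [huv, one_mul]
    -- x - e is nilpotent
    have hnilxe : IsNilpotent (x - e) := by
      obtain ⟨W2, hW2⟩ := hdvd ((X : ℤ[X]) ^ (k + 1) + X * (1 - X) ^ k - X ^ k)
        (by simp [IsRoot, zero_pow hkne, zero_pow (by omega : k + 1 ≠ 0)])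
        (by simp [IsRoot, zero_pow hkne, zero_pow (by omega : k + 1 ≠ 0)])
      have haeD : aeval x ((X : ℤ[X]) ^ (k + 1) + X * (1 - X) ^ k - X ^ k) = x * u - x ^ k := by
        rw [hudef]
        simp only [map_sub, map_add, map_mul, map_pow, map_one, aeval_X]
        rw [mul_add, ← pow_succ']
      have hnil1 : IsNilpotent (x * u - x ^ k) := by
        rw [← haeD, hW2, map_mul]
        exact (hcommP _ _).isNilpotent_mul_right ⟨k0, by rw [haeT]; exact hk0⟩
      have hcomm2 : Commute v (x * u - x ^ k) := by
        apply Commute.units_inv_left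
        rw [hU]
        have h2 := hcommP ((X : ℤ[X]) ^ k + (1 - X) ^ k)
          ((X : ℤ[X]) ^ (k + 1) + X * (1 - X) ^ k - X ^ k)
        rwa [haeU, haeD] at h2
      have heq2 : x - e = (x * u - x ^ k) * v := by
        rw [sub_mul, mul_assoc, huv, mul_one, hedef]
      rw [heq2]
      exact hcomm2.symm.isNilpotent_mul_right hnil1
    -- assemble
    refine ⟨e, L * a ^ q * (x ^ k0 * v) * (a ^ p * L), ?_, hide, ?_⟩
    · -- e = a^p * r * a^q
      have hxe : e = x * (x ^ k0 * v) * x := by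
        calc e = x ^ (k0 + 2) * v := by rw [hedef, hkdef]
          _ = ((x * x ^ k0) * x) * v := by rw [pow_succ, pow_succ']
          _ = x * x ^ k0 * (x * v) := by simp only [mul_assoc]
          _ = x * x ^ k0 * (v * x) := by rw [hxv]
          _ = x * (x ^ k0 * v) * x := by simp only [mul_assoc]
      rw [hxe, hxdef]
      simp only [mul_assoc]
    · -- nilpotency
      have hm1 : a ^ p * (1 - x) * a ^ q ∈ I := (hI _).mpr hx1
      have hm2 : a ^ p * ((x - e) * a ^ q) ∈ I :=
        I.mul_mem_left _ _ (I.mul_mem_right _ _ ((hI _).mpr hnilxe))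
      have heq3 : a ^ p * (1 - e) * a ^ q =
          a ^ p * (1 - x) * a ^ q + a ^ p * ((x - e) * a ^ q) := by
        noncomm_ring
      rw [heq3]
      exact (hI _).mp (I.add_mem hm1 hm2)
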